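/- arXiv:1902.08417 — 3 statements merged into one kernel-verified Lean document; each statement's English description precedes it below -/
import Mathlib

section
/- Let α, β > 0 and p ≥ 1. If there exists a constant C > 0 such that for every positive integer k and every x > 0 one has (αx + 1)^{−(pk + pn/2)} ≤ C · (pβx + 1)^{−(pk+n)/2}, then 2α ≥ pβ. -/
open Real

/-- If there is `C > 0` with `(αx+1)^{−(pk+pn/2)} ≤ C (pβx+1)^{−(pk+n)/2}` for every
positive integer `k` and every `x > 0`, then `2α ≥ pβ`. -/
theorem stmt6 (n : ℕ) (hn : 2 ≤ n) (α β p : ℝ) (hα : 0 < α) (hβ : 0 < β) (hp : 1 ≤ p)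
    (h : ∃ C > (0 : ℝ), ∀ k : ℕ, 1 ≤ k → ∀ x : ℝ, 0 < x →
      (α * x + 1) ^ (-(p * k + p * n / 2)) ≤ C * (p * β * x + 1) ^ (-((p * k + n) / 2))) :
    2 * α ≥ p * β := by
  by_contra hlt
  push_neg at hlt
  obtain ⟨C, hC, H⟩ := h
  -- choose a small x
  set x : ℝ := (p * β - 2 * α) / (2 * α ^ 2) with hxdef
  have hx : 0 < x := by
    apply div_pos <;> nlinarith
  set a : ℝ := α * x + 1 with hadef
  set b : ℝ := p * β * x + 1 with hbdef
  have ha1 : 1 < a := by nlinarith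
  have ha0 : 0 < a := by linarith
  have hb0 : 0 < b := by nlinarith
  have hab : a ^ 2 < b := by
    have hα2 : α ^ 2 * x = (p * β - 2 * α) / 2 := by
      rw [hxdef]; field_simp
    nlinarith [mul_pos hx hx, sq_nonneg x, mul_pos hα hx]
  set c : ℝ := b ^ ((1:ℝ)/2) with hcdef
  have hc0 : 0 < c := Real.rpow_pos_of_pos hb0 _
  have hc2 : c ^ (2:ℕ) = b := by
    rw [hcdef, ← Real.rpow_natCast (b ^ ((1:ℝ)/2)) 2, ← Real.rpow_mul hb0.le]
    norm_num
  have hac : a < c := by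
    apply lt_of_pow_lt_pow_left₀ 2 hc0.le
    rw [hc2]; exact hab
  set s : ℝ := c / a with hsdef
  have hs1 : 1 < s := (one_lt_div ha0).mpr hac
  set D : ℝ := C * a ^ (p * n / 2) / c ^ (n:ℝ) with hDdef
  obtain ⟨k, hk⟩ := pow_unbounded_of_one_lt D hs1
  set K : ℕ := max k 1 with hKdef
  have hK1 : 1 ≤ K := le_max_right _ _
  have hkK : D < s ^ K := lt_of_lt_of_le hk (pow_le_pow_right₀ hs1.le (le_max_left _ _))
  -- main inequality from hypothesis
  have H1 := H K hK1 x hx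
  have hA : (0:ℝ) < a ^ (p * K + p * n / 2) := Real.rpow_pos_of_pos ha0 _
  have hB : (0:ℝ) < b ^ ((p * K + n) / 2) := Real.rpow_pos_of_pos hb0 _
  rw [Real.rpow_neg ha0.le, Real.rpow_neg hb0.le] at H1
  have h2 : b ^ ((p * K + (n:ℝ)) / 2) ≤ C * a ^ (p * K + p * n / 2) := by
    nlinarith [mul_pos hA hB, mul_inv_cancel₀ hA.ne', mul_inv_cancel₀ hB.ne',
      mul_le_mul_of_nonneg_left H1 (mul_pos hA hB).le]
  -- rewrite LHS using c
  have hbu : b ^ ((p * K + (n:ℝ)) / 2) = c ^ (p * K : ℝ) * c ^ (n:ℝ) := by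
    rw [hcdef, ← Real.rpow_mul hb0.le, ← Real.rpow_mul hb0.le, ← Real.rpow_add hb0]
    congr 1
    ring
  have hat : a ^ (p * K + p * n / 2 : ℝ) = a ^ (p * K : ℝ) * a ^ (p * n / 2 : ℝ) := by
    rw [← Real.rpow_add ha0]
  rw [hbu, hat] at h2
  -- conclude s ^ (p*K) ≤ D
  have haK : (0:ℝ) < a ^ (p * K : ℝ) := Real.rpow_pos_of_pos ha0 _
  have hcK : (0:ℝ) < c ^ (p * K : ℝ) := Real.rpow_pos_of_pos hc0 _
  have hcn : (0:ℝ) < c ^ (n:ℝ) := Real.rpow_pos_of_pos hc0 _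
  have hsD : s ^ (p * K : ℝ) ≤ D := by
    rw [hsdef, Real.div_rpow hc0.le ha0.le, hDdef, div_le_div_iff₀ haK hcn]
    calc c ^ (p * K : ℝ) * c ^ (n:ℝ) ≤ C * (a ^ (p * K : ℝ) * a ^ (p * n / 2 : ℝ)) := h2
    _ = C * a ^ (p * n / 2 : ℝ) * a ^ (p * K : ℝ) := by ring
  have hKs : s ^ K ≤ s ^ (p * K : ℝ) := by
    rw [← Real.rpow_natCast s K]
    apply Real.rpow_le_rpow_of_exponent_le hs1.le
    exact le_mul_of_one_le_left (Nat.cast_nonneg K) hp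
  linarith [lt_of_lt_of_le hkK (le_trans hKs hsD)]
end

section
/- Let β > 0 and n ≥ 2. Define C(n,β)² = sup over integers k, j ≥ 0 and 0 ≤ i ≤ min(k,j) with i ≡ k ≡ j (mod 2) of β^{i − (k+j)/2}·Γ(i + n/2)/Γ((k+j+n)/2). Then C(n,β)² ≤ 1 if β ≥ 1 or 1/β ≤ n/2, and C(n,β)² ≤ (2/(nβ))^{⌊1/β − n/2 + 1⌋ + 1} if 1/β > n/2. -/
open Real

lemma gamma_add_nat_aux (x : ℝ) (hx : 0 < x) (d : ℕ) :
    Real.Gamma (x + d) = (∏ m ∈ Finset.range d, (x + m)) * Real.Gamma x := by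
  induction d with
  | zero => simp
  | succ d ih =>
    have h1 : x + ((d : ℕ) + 1 : ℕ) = (x + d) + 1 := by push_cast; ring
    have h2 : x + (d : ℝ) ≠ 0 := by positivity
    rw [h1, Real.Gamma_add_one h2, Finset.prod_range_succ, ih]
    push_cast; ring

set_option maxHeartbeats 1000000 in
/-- Bound for `C(n,β)² = sup β^{i−(k+j)/2}Γ(i+n/2)/Γ((k+j+n)/2)` over `k, j ≥ 0`,
`0 ≤ i ≤ min(k,j)`, `i ≡ k ≡ j (mod 2)`: it is at most `1` if `β ≥ 1` or `1/β ≤ n/2`,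
and at most `(2/(nβ))^{⌊1/β − n/2 + 1⌋ + 1}` if `1/β > n/2`. -/
theorem stmt17 (n : ℕ) (hn : 2 ≤ n) (β : ℝ) (hβ : 0 < β) (k j i : ℕ)
    (hik : i ≤ k) (hij : i ≤ j) (hmod1 : i % 2 = k % 2) (hmod2 : k % 2 = j % 2) :
    ((1 ≤ β ∨ 1 / β ≤ (n : ℝ) / 2) →
      β ^ ((i : ℝ) - ((k : ℝ) + j) / 2) * Real.Gamma ((i : ℝ) + (n : ℝ) / 2) /
          Real.Gamma (((k : ℝ) + j + n) / 2) ≤ 1) ∧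
    ((n : ℝ) / 2 < 1 / β →
      β ^ ((i : ℝ) - ((k : ℝ) + j) / 2) * Real.Gamma ((i : ℝ) + (n : ℝ) / 2) /
          Real.Gamma (((k : ℝ) + j + n) / 2) ≤
        (2 / (n * β)) ^ (⌊1 / β - (n : ℝ) / 2 + 1⌋ + 1)) := by
  have hn2 : (1 : ℝ) ≤ (n : ℝ) / 2 := by
    have : (2 : ℝ) ≤ (n : ℝ) := by exact_mod_cast hn
    linarith
  set d : ℕ := (k + j) / 2 - i with hd
  have hkjd : (k + j : ℕ) = 2 * (i + d) := by omega
  have hkjR : (k : ℝ) + j = 2 * ((i : ℝ) + d) := by exact_mod_cast hkjd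
  set x : ℝ := (i : ℝ) + (n : ℝ) / 2 with hx
  have hx0 : 0 < x := by
    have : (0 : ℝ) ≤ (i : ℝ) := Nat.cast_nonneg i
    rw [hx]; linarith
  have hexp : (i : ℝ) - ((k : ℝ) + j) / 2 = -(d : ℝ) := by rw [hkjR]; ring
  have harg : ((k : ℝ) + j + n) / 2 = x + d := by rw [hkjR, hx]; ring
  have hβd : β ^ ((i : ℝ) - ((k : ℝ) + j) / 2) = (β ^ d)⁻¹ := by
    rw [hexp, Real.rpow_neg hβ.le, Real.rpow_natCast]
  have hG : Real.Gamma (((k : ℝ) + j + n) / 2)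
      = (∏ m ∈ Finset.range d, (x + m)) * Real.Gamma x := by
    rw [harg, gamma_add_nat_aux x hx0]
  have hGx : 0 < Real.Gamma x := Real.Gamma_pos_of_pos hx0
  have hxm : ∀ m : ℕ, (n : ℝ) / 2 ≤ x + m := by
    intro m
    have h1 : (0 : ℝ) ≤ (i : ℝ) := Nat.cast_nonneg i
    have h2 : (0 : ℝ) ≤ (m : ℝ) := Nat.cast_nonneg m
    rw [hx]; linarith
  have hPpos : ∀ m ∈ Finset.range d, (0 : ℝ) < x + m := by
    intro m _
    have := hxm m; linarith
  have hR : β ^ ((i : ℝ) - ((k : ℝ) + j) / 2) * Real.Gamma ((i : ℝ) + (n : ℝ) / 2) /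
        Real.Gamma (((k : ℝ) + j + n) / 2)
      = ∏ m ∈ Finset.range d, (β * (x + m))⁻¹ := by
    rw [hβd, hG]
    have hP : (0 : ℝ) < ∏ m ∈ Finset.range d, (x + m) := Finset.prod_pos hPpos
    rw [Finset.prod_inv_distrib, Finset.prod_mul_distrib, Finset.prod_const]
    rw [Finset.card_range]
    rw [show (i : ℝ) + (n : ℝ) / 2 = x from rfl]
    field_simp
  rw [hR]
  constructor
  · intro hcase
    apply Finset.prod_le_one
    · intro m hm
      have := hPpos m hm
      positivity
    · intro m hm
      have hxm' := hxm m
      have hpos := hPpos m hm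
      rw [inv_le_one_iff₀]
      right
      rcases hcase with h1 | h2
      · have h3 : (1 : ℝ) ≤ x + m := le_trans hn2 hxm'
        nlinarith
      · have h3 : 1 / β ≤ x + m := le_trans h2 hxm'
        have h4 : β * (1 / β) = 1 := by field_simp
        have h5 := mul_le_mul_of_nonneg_left h3 hβ.le
        rw [h4] at h5
        linarith
  · intro h
    set c : ℝ := 2 / ((n : ℝ) * β) with hc
    have hnpos : (0 : ℝ) < (n : ℝ) := by positivity
    have hnβ : (n : ℝ) * β < 2 := by
      have h1 : (n : ℝ) / 2 * β < 1 / β * β := mul_lt_mul_of_pos_right h hβ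
      rw [one_div_mul_cancel hβ.ne'] at h1
      linarith
    have hc1 : 1 < c := by
      rw [hc, lt_div_iff₀ (by positivity)]
      linarith
    set N : ℤ := ⌊1 / β - (n : ℝ) / 2 + 1⌋ with hN
    have hN1 : 1 ≤ N := by
      rw [hN]
      apply Int.le_floor.mpr
      push_cast
      linarith
    set Nt : ℕ := N.toNat with hNt
    have hNtN : (Nt : ℤ) = N := Int.toNat_of_nonneg (by omega)
    have hNtR : (1 : ℝ) / β - (n : ℝ) / 2 ≤ (Nt : ℝ) := by
      have h1 : (1 : ℝ) / β - (n : ℝ) / 2 + 1 - 1 < (N : ℝ) := by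
        have := Int.sub_one_lt_floor (1 / β - (n : ℝ) / 2 + 1)
        rw [← hN] at this; linarith
      have h2 : ((Nt : ℤ) : ℝ) = (N : ℝ) := by exact_mod_cast hNtN
      push_cast at h2
      linarith
    have hzc : c ^ (N + 1) = c ^ (Nt + 1) := by
      rw [show N + 1 = ((Nt + 1 : ℕ) : ℤ) by omega, zpow_natCast]
    rw [hzc]
    calc ∏ m ∈ Finset.range d, (β * (x + m))⁻¹
        ≤ ∏ m ∈ Finset.range d, (if m < Nt then c else 1) := by
          apply Finset.prod_le_prod
          · intro m hm
            have := hPpos m hm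
            positivity
          · intro m hm
            have hxm' := hxm m
            have hpos := hPpos m hm
            split
            · -- factor ≤ c
              rw [hc, show (2 : ℝ) / ((n : ℝ) * β) = ((n : ℝ) * β / 2)⁻¹ by
                rw [inv_div]]
              apply inv_anti₀ (by positivity)
              nlinarith
            · -- m ≥ Nt, factor ≤ 1
              rename_i hmN
              have hmN' : (Nt : ℝ) ≤ (m : ℝ) := by exact_mod_cast Nat.le_of_not_lt hmN
              rw [inv_le_one_iff₀]
              right
              have hx1β : 1 / β ≤ x + m := by
                have hi : (0 : ℝ) ≤ (i : ℝ) := Nat.cast_nonneg i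
                rw [hx]; linarith
              have h5 := mul_le_mul_of_nonneg_right hx1β hβ.le
              rw [one_div_mul_cancel hβ.ne'] at h5
              linarith
      _ = c ^ ((Finset.range d).filter (· < Nt)).card := by
          rw [Finset.prod_ite, Finset.prod_const, Finset.prod_const, one_pow, mul_one]
      _ ≤ c ^ (Nt + 1) := by
          apply pow_le_pow_right₀ hc1.le
          have hsub : (Finset.range d).filter (· < Nt) ⊆ Finset.range Nt := by
            intro m hm
            simp only [Finset.mem_filter, Finset.mem_range] at hm ⊢
            exact hm.2
          have := Finset.card_le_card hsub
          simp only [Finset.card_range] at this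
          omega
end

section
/- Let n ≥ 2, β > 0, and let f be a polynomial on ℝⁿ with harmonic decomposition data a_s^k as in the paper: f = ∑_k p_k, p_k homogeneous of degree k, and on the sphere p_k = ∑_i ψ_k^i with ψ_k^i(x) = ∑_{|s|=i} a_s^k x^s harmonic homogeneous of degree i. Then ‖∑_{k} ∑_{i} ψ_k^i‖²_{L²(ℝⁿ, dμ_β)} = ∑_{k,j≥0} ∑_{i≥0} (β/2)^i ∑_{|s|=i} a_s^k \overline{a_s^j} s!. -/
open Real MeasureTheory Finset MvPolynomial
open scoped ENNReal NNReal

noncomputable section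

/-- The Pochhammer symbol `(a)_m = a(a+1)⋯(a+m−1)`. -/
def poch (a : ℝ) (m : ℕ) : ℝ := ∏ i ∈ Finset.range m, (a + i)

/-- Kummer's confluent hypergeometric function `₁F₁(a, b; x)`. -/
def F11 (a b x : ℝ) : ℝ :=
  ∑' k : ℕ, poch a k * x ^ k / (poch b k * (Nat.factorial k : ℝ))

/-- The Gaussian probability measure `dμ_γ(y) = (πγ)^{−n/2} e^{−|y|²/γ} dy` on `ℝⁿ`. -/
def gaussMeasure (n : ℕ) (γ : ℝ) : Measure (EuclideanSpace ℝ (Fin n)) :=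
  volume.withDensity fun y =>
    ENNReal.ofReal ((Real.pi * γ) ^ (-(n : ℝ) / 2) * Real.exp (-‖y‖ ^ 2 / γ))

/-- The solid zonal harmonic `Y_m(x,y) = |y|^m 𝒴_m(x, y/|y|)`, given by the explicit
formula for zonal harmonics (with `Y_0 = 1`). -/
def zonal (n m : ℕ) (x y : EuclideanSpace ℝ (Fin n)) : ℝ :=
  if m = 0 then 1
  else
    ((n : ℝ) + 2 * m - 2) *
      ∑ k ∈ Finset.range (m / 2 + 1),
        (-1 : ℝ) ^ k * (∏ i ∈ Finset.range (m - k - 1), ((n : ℝ) + 2 * i)) /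
            (2 ^ k * (Nat.factorial k : ℝ) * (Nat.factorial (m - 2 * k) : ℝ)) *
          (inner ℝ x y : ℝ) ^ (m - 2 * k) * (‖x‖ ^ 2 * ‖y‖ ^ 2) ^ k

/-- The harmonic Fock reproducing kernel `H_α(x,y) = ∑ₖ Y_k(x,y)/(α^k (n/2)_k)`. -/
def Hker (n : ℕ) (α : ℝ) (x y : EuclideanSpace ℝ (Fin n)) : ℝ :=
  ∑' m : ℕ, zonal n m x y / (α ^ m * poch ((n : ℝ) / 2) m)

/-- `f : ℝⁿ → ℝ` is harmonic: smooth with vanishing Laplacian. -/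
def IsHarmonic {n : ℕ} (f : EuclideanSpace ℝ (Fin n) → ℝ) : Prop :=
  ContDiff ℝ ⊤ f ∧ ∀ x, ∑ i : Fin n,
    iteratedFDeriv ℝ 2 f x ![EuclideanSpace.single i 1, EuclideanSpace.single i 1] = 0

section Aux



def g1 (β t : ℝ) : ℝ := (Real.pi*β)^(-(1:ℝ)/2) * Real.exp (-t^2/β)

def J (β : ℝ) (t : ℕ) : ℝ := ∫ v : ℝ, g1 β v * v ^ t

variable {β : ℝ} (hβ : 0 < β)

lemma aux_int (b : ℝ) (hb : 0 < b) (t : ℕ) :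
    Integrable (fun v : ℝ => v ^ t * Real.exp (-b * v ^ 2)) := by
  have := integrable_rpow_mul_exp_neg_mul_sq hb (s := (t : ℝ))
    (lt_of_lt_of_le (by norm_num) (Nat.cast_nonneg t))
  simpa [Real.rpow_natCast] using this

include hβ

lemma Jint (t : ℕ) : Integrable (fun v : ℝ => g1 β v * v ^ t) := by
  have h := (aux_int β⁻¹ (inv_pos.2 hβ) t).const_mul ((Real.pi*β)^(-(1:ℝ)/2))
  refine h.congr (Filter.Eventually.of_forall fun v => ?_)
  simp only [g1]
  rw [neg_div, div_eq_inv_mul, neg_mul]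
  ring

lemma J0 : J β 0 = 1 := by
  have hπβ : 0 < Real.pi * β := by positivity
  have : (fun v : ℝ => g1 β v * v ^ 0) =
      fun v : ℝ => (Real.pi*β)^(-(1:ℝ)/2) * Real.exp (-β⁻¹ * v ^ 2) := by
    funext v; simp [g1, neg_div, div_eq_inv_mul, neg_mul]
  rw [J, this, integral_const_mul, integral_gaussian]
  have hd : Real.pi/β⁻¹ = Real.pi*β := by field_simp
  rw [hd, Real.sqrt_eq_rpow, ← Real.rpow_add hπβ]
  norm_num

omit hβ in
lemma Jodd (r : ℕ) : J β (2*r+1) = 0 := by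
  have hodd : Odd (2*r+1) := ⟨r, by ring⟩
  have h : ∫ v : ℝ, g1 β v * v ^ (2*r+1) =
      ∫ v : ℝ, g1 β (-v) * (-v) ^ (2*r+1) := (integral_neg_eq_self _ _).symm
  have h2 : (fun v : ℝ => g1 β (-v) * (-v) ^ (2*r+1)) =
      fun v : ℝ => -(g1 β v * v ^ (2*r+1)) := by
    funext v
    rw [hodd.neg_pow]
    simp only [g1, neg_sq]
    ring
  rw [h2, integral_neg] at h
  have : J β (2*r+1) = - J β (2*r+1) := h
  linarith

lemma Jrec (t : ℕ) : J β (t+2) = β/2 * (t+1) * J β t := by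
  set b := β⁻¹ with hb
  have hb0 : 0 < b := inv_pos.2 hβ
  have key : ∫ v : ℝ, v ^ (t+2) * Real.exp (-b * v ^ 2)
      = (t+1)/(2*b) * ∫ v : ℝ, v ^ t * Real.exp (-b * v ^ 2) := by
    have hd : ∀ v : ℝ, HasDerivAt (fun v : ℝ => v ^ (t+1) * Real.exp (-b * v ^ 2))
        (((t:ℝ)+1) * v ^ t * Real.exp (-b * v ^ 2)
          - 2*b* (v ^ (t+2) * Real.exp (-b * v ^ 2))) v := by
      intro v
      have h1 := (hasDerivAt_pow (t+1) v)
      have h2 := ((hasDerivAt_pow 2 v).const_mul (-b)).exp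
      have : HasDerivAt (fun v : ℝ => v ^ (t+1) * Real.exp (-b * v ^ 2)) _ v := h1.mul h2
      convert this using 1
      simp only [Nat.cast_add, Nat.cast_one, Nat.add_sub_cancel, pow_one]
      ring
    have i1 : Integrable (fun v : ℝ => ((t:ℝ)+1) * v ^ t * Real.exp (-b * v ^ 2)) :=
      ((aux_int b hb0 t).const_mul ((t:ℝ)+1)).congr
        (Filter.Eventually.of_forall fun v => by ring)
    have i2 : Integrable (fun v : ℝ => 2*b*(v ^ (t+2) * Real.exp (-b * v ^ 2))) :=
      (aux_int b hb0 (t+2)).const_mul (2*b)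
    have hzero := integral_eq_zero_of_hasDerivAt_of_integrable hd (i1.sub i2)
      (aux_int b hb0 (t+1))
    rw [integral_sub i1 i2] at hzero
    have e1 : ∫ v : ℝ, ((t:ℝ)+1) * v ^ t * Real.exp (-b * v ^ 2)
        = ((t:ℝ)+1) * ∫ v : ℝ, v ^ t * Real.exp (-b * v ^ 2) := by
      rw [← integral_const_mul]; congr 1; funext v; ring
    rw [e1, integral_const_mul] at hzero
    have h2b : (2*b) ≠ 0 := by positivity
    rw [div_mul_eq_mul_div, eq_div_iff h2b]
    linarith [hzero]
  have conv : ∀ s : ℕ, J β s = (Real.pi*β)^(-(1:ℝ)/2) * ∫ v : ℝ, v ^ s * Real.exp (-b * v ^ 2) := by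
    intro s
    rw [J, ← integral_const_mul]
    congr 1; funext v
    simp only [g1, hb]
    rw [neg_div, div_eq_inv_mul, neg_mul]
    ring
  rw [conv, conv, key]
  have h2 : ((t:ℝ)+1)/(2*b) = β/2*((t:ℝ)+1) := by
    rw [hb]; field_simp
  rw [h2]; ring




variable {n : ℕ}

include hβ

lemma dens_eq (x : EuclideanSpace ℝ (Fin n)) :
    (Real.pi * β) ^ (-(n : ℝ) / 2) * Real.exp (-‖x‖ ^ 2 / β) = ∏ m, g1 β (x m) := by
  have hπβ : (0:ℝ) < Real.pi * β := by positivity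
  have hn : ‖x‖ ^ 2 = ∑ m, (x m)^2 := by
    rw [EuclideanSpace.norm_eq, Real.sq_sqrt (Finset.sum_nonneg fun m _ => sq_nonneg _)]
    simp
  have h1 : (Real.pi * β) ^ (-(n : ℝ) / 2) = ∏ _m : Fin n, (Real.pi*β)^(-(1:ℝ)/2) := by
    rw [Finset.prod_const, ← Real.rpow_natCast ((Real.pi*β)^(-(1:ℝ)/2)) _, ← Real.rpow_mul hπβ.le]
    congr 1
    simp [Finset.card_univ]
    ring
  have h2 : Real.exp (-‖x‖ ^ 2 / β) = ∏ m, Real.exp (-(x m)^2/β) := by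
    rw [← Real.exp_sum]
    congr 1
    rw [hn, ← Finset.sum_div, ← Finset.sum_neg_distrib]
  rw [h1, h2, ← Finset.prod_mul_distrib]
  rfl

lemma gauss_integral_eq (f : EuclideanSpace ℝ (Fin n) → ℝ) :
    ∫ x, f x ∂(gaussMeasure n β) = ∫ x, (∏ m, g1 β (x m)) * f x := by
  rw [gaussMeasure]
  have hc : Continuous fun y : EuclideanSpace ℝ (Fin n) =>
      (Real.pi * β) ^ (-(n : ℝ) / 2) * Real.exp (-‖y‖ ^ 2 / β) := by
    continuity
  have hm : Measurable fun y : EuclideanSpace ℝ (Fin n) =>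
      ((Real.pi * β) ^ (-(n : ℝ) / 2) * Real.exp (-‖y‖ ^ 2 / β)).toNNReal :=
    hc.measurable.real_toNNReal
  rw [show (fun y : EuclideanSpace ℝ (Fin n) => ENNReal.ofReal
      ((Real.pi * β) ^ (-(n : ℝ) / 2) * Real.exp (-‖y‖ ^ 2 / β)))
    = fun y => (((Real.pi * β) ^ (-(n : ℝ) / 2) * Real.exp (-‖y‖ ^ 2 / β)).toNNReal : ℝ≥0∞)
    from rfl]
  rw [integral_withDensity_eq_integral_smul hm f]
  congr 1
  funext x
  rw [NNReal.smul_def, smul_eq_mul, Real.coe_toNNReal _ (by positivity), dens_eq hβ]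

lemma gauss_integrable_iff (f : EuclideanSpace ℝ (Fin n) → ℝ) :
    Integrable f (gaussMeasure n β) ↔
      Integrable (fun x => (∏ m, g1 β (x m)) * f x) volume := by
  rw [gaussMeasure]
  have hc : Continuous fun y : EuclideanSpace ℝ (Fin n) =>
      (Real.pi * β) ^ (-(n : ℝ) / 2) * Real.exp (-‖y‖ ^ 2 / β) := by continuity
  have hm : Measurable fun y : EuclideanSpace ℝ (Fin n) =>
      ((Real.pi * β) ^ (-(n : ℝ) / 2) * Real.exp (-‖y‖ ^ 2 / β)).toNNReal :=
    hc.measurable.real_toNNReal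
  rw [show (fun y : EuclideanSpace ℝ (Fin n) => ENNReal.ofReal
      ((Real.pi * β) ^ (-(n : ℝ) / 2) * Real.exp (-‖y‖ ^ 2 / β)))
    = fun y => (((Real.pi * β) ^ (-(n : ℝ) / 2) * Real.exp (-‖y‖ ^ 2 / β)).toNNReal : ℝ≥0∞)
    from rfl]
  rw [integrable_withDensity_iff_integrable_smul hm]
  have hpt : ∀ x : EuclideanSpace ℝ (Fin n),
      (((Real.pi * β) ^ (-(n:ℝ) / 2) * Real.exp (-‖x‖ ^ 2 / β)).toNNReal : ℝ) • f x
        = (∏ m, g1 β (x m)) * f x := by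
    intro x
    rw [smul_eq_mul, Real.coe_toNNReal _ (by positivity), dens_eq hβ]
  constructor <;> intro h <;> refine h.congr (Filter.Eventually.of_forall fun x => ?_)
  · exact hpt x
  · exact (hpt x).symm

omit hβ in
lemma pi_form (h : (Fin n → ℝ) → ℝ) :
    ∫ x : EuclideanSpace ℝ (Fin n), h (fun m => x m)
      = ∫ y : Fin n → ℝ, h y := by
  rw [← ((EuclideanSpace.volume_preserving_symm_measurableEquiv_toLp (Fin n)).symm).integral_comp']
  rfl

omit hβ in
lemma pi_form_integrable (h : (Fin n → ℝ) → ℝ)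
    (hi : Integrable h (volume : Measure (Fin n → ℝ))) :
    Integrable (fun x : EuclideanSpace ℝ (Fin n) => h (fun m => x m)) volume := by
  have := ((EuclideanSpace.volume_preserving_symm_measurableEquiv_toLp (Fin n)).integrable_comp_emb
    (MeasurableEquiv.measurableEmbedding _)).2 hi
  exact this

lemma int_monomial (u : Fin n → ℕ) :
    ∫ x, (∏ m, (x m) ^ (u m)) ∂(gaussMeasure n β) = ∏ m, J β (u m) := by
  rw [gauss_integral_eq hβ]
  have : ∀ x : EuclideanSpace ℝ (Fin n),
      (∏ m, g1 β (x m)) * (∏ m, (x m) ^ (u m)) = ∏ m, (g1 β (x m) * (x m) ^ (u m)) := by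
    intro x; rw [← Finset.prod_mul_distrib]
  simp_rw [this]
  refine Eq.trans (pi_form (fun y : Fin n → ℝ => ∏ m, (g1 β (y m) * (y m) ^ (u m)))) ?_
  rw [volume_pi, integral_fintype_prod_eq_prod (fun m (v : ℝ) => g1 β v * v ^ (u m))]
  rfl

lemma integrable_monomial (u : Fin n → ℕ) :
    Integrable (fun x => ∏ m, (x m) ^ (u m)) (gaussMeasure n β) := by
  rw [gauss_integrable_iff hβ]
  have : (fun x : EuclideanSpace ℝ (Fin n) => (∏ m, g1 β (x m)) * ∏ m, (x m) ^ (u m))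
      = fun x : EuclideanSpace ℝ (Fin n) =>
        (fun y : Fin n → ℝ => ∏ m, (g1 β (y m) * (y m) ^ (u m))) (fun m => x m) := by
    funext x; rw [← Finset.prod_mul_distrib]
  rw [this]
  exact pi_form_integrable (fun y : Fin n → ℝ => ∏ m, (g1 β (y m) * (y m) ^ (u m)))
    (Integrable.fintype_prod (f := fun m (v : ℝ) => g1 β v * v ^ (u m))
      (fun m => Jint hβ (u m)))



omit hβ

lemma asa (w : Fin n →₀ ℕ) (m : Fin n) :
    (w + Finsupp.single m 1 : Fin n →₀ ℕ) m = w m + 1 := by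
  rw [Finsupp.add_apply, Finsupp.single_eq_same]

lemma asn (w : Fin n →₀ ℕ) {m b : Fin n} (h : b ≠ m) :
    (w + Finsupp.single m 1 : Fin n →₀ ℕ) b = w b := by
  rw [Finsupp.add_apply, Finsupp.single_apply, if_neg (fun hh => h hh.symm), add_zero]

lemma ssa (w : Fin n →₀ ℕ) (m : Fin n) :
    (w - Finsupp.single m 1 : Fin n →₀ ℕ) m = w m - 1 := by
  rw [Finsupp.tsub_apply, Finsupp.single_eq_same]

lemma ssn (w : Fin n →₀ ℕ) {m b : Fin n} (h : b ≠ m) :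
    (w - Finsupp.single m 1 : Fin n →₀ ℕ) b = w b := by
  rw [Finsupp.tsub_apply, Finsupp.single_apply, if_neg (fun hh => h hh.symm), Nat.sub_zero]

lemma sum_asa (w : Fin n →₀ ℕ) (m : Fin n) :
    ∑ b, (w + Finsupp.single m 1 : Fin n →₀ ℕ) b = (∑ b, w b) + 1 := by
  rw [← Finset.add_sum_erase univ _ (mem_univ m), ← Finset.add_sum_erase univ (fun b => w b) (mem_univ m)]
  rw [asa, Finset.sum_congr rfl (fun b hb => asn w (Finset.mem_erase.1 hb).1)]
  omega

lemma fsub_add_cancel {w : Fin n →₀ ℕ} {m : Fin n} (h : w m ≠ 0) :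
    w - Finsupp.single m 1 + Finsupp.single m 1 = w := by
  ext b
  by_cases hb : b = m
  · subst hb; rw [asa, ssa]; omega
  · rw [asn _ hb, ssn _ hb]

lemma fadd_sub_cancel (w : Fin n →₀ ℕ) (m : Fin n) :
    w + Finsupp.single m 1 - Finsupp.single m 1 = w := by
  ext b
  by_cases hb : b = m
  · subst hb; rw [ssa, asa]; omega
  · rw [ssn _ hb, asn _ hb]

/-- coefficient formula for pderiv -/
lemma coeff_pderiv' (m : Fin n) (p : MvPolynomial (Fin n) ℝ) (w : Fin n →₀ ℕ) :
    coeff w (pderiv m p) = ((w m : ℝ) + 1) * coeff (w + Finsupp.single m 1) p := by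
  induction p using MvPolynomial.induction_on' with
  | add p q hp hq => simp [hp, hq, mul_add]
  | monomial u a =>
    rw [pderiv_monomial, coeff_monomial, coeff_monomial]
    by_cases hum : u m = 0
    · have h1 : u - Finsupp.single m 1 = u := by
        ext b
        by_cases hb : b = m
        · subst hb; rw [ssa]; omega
        · rw [ssn _ hb]
      have h2 : ¬ (u = w + Finsupp.single m 1) := by
        intro h
        rw [h, asa] at hum
        omega
      rw [h1, if_neg h2]
      by_cases hw : u = w
      · rw [if_pos hw, hum]; simp
      · rw [if_neg hw]; ring
    · have hiff : u - Finsupp.single m 1 = w ↔ u = w + Finsupp.single m 1 := by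
        constructor
        · intro h
          rw [← h, fsub_add_cancel hum]
        · intro h
          rw [h, fadd_sub_cancel]
      by_cases hc : u - Finsupp.single m 1 = w
      · rw [if_pos hc, if_pos (hiff.1 hc)]
        have : u m = w m + 1 := by
          rw [hiff.1 hc, asa]
        rw [this]
        push_cast
        ring
      · rw [if_neg hc, if_neg (fun h => hc (hiff.2 h))]
        ring

lemma pderiv_comm' (i j : Fin n) (p : MvPolynomial (Fin n) ℝ) :
    pderiv i (pderiv j p) = pderiv j (pderiv i p) := by
  apply MvPolynomial.ext
  intro w
  rw [coeff_pderiv', coeff_pderiv', coeff_pderiv', coeff_pderiv']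
  by_cases hij : i = j
  · subst hij; rfl
  · rw [asn w (Ne.symm hij), asn w hij]
    rw [show w + Finsupp.single i 1 + Finsupp.single j 1
        = w + Finsupp.single j 1 + Finsupp.single i 1 by rw [add_right_comm]]
    ring

def lapP (p : MvPolynomial (Fin n) ℝ) : MvPolynomial (Fin n) ℝ :=
  ∑ m, pderiv m (pderiv m p)

lemma lapP_pderiv (m : Fin n) (p : MvPolynomial (Fin n) ℝ) :
    lapP (pderiv m p) = pderiv m (lapP p) := by
  rw [lapP, lapP, map_sum]
  congr 1
  funext m'
  rw [pderiv_comm' m' m, pderiv_comm' m' m]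

def Wfac (u : Fin n →₀ ℕ) : ℝ := ∏ m, ((u m).factorial : ℝ)

def Fish (p q : MvPolynomial (Fin n) ℝ) : ℝ :=
  ∑ u ∈ p.support, coeff u p * coeff u q * Wfac u

def Hm (p : MvPolynomial (Fin n) ℝ) (i : ℕ) : Prop :=
  ∀ u, coeff u p ≠ 0 → ∑ m, u m = i

lemma Fish_eq_of_subset {p q : MvPolynomial (Fin n) ℝ} {S : Finset (Fin n →₀ ℕ)}
    (hS : p.support ⊆ S) :
    Fish p q = ∑ u ∈ S, coeff u p * coeff u q * Wfac u := by
  rw [Fish]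
  refine Finset.sum_subset hS fun u _ hu => ?_
  rw [notMem_support_iff.1 hu]
  ring

lemma Fish_comm (p q : MvPolynomial (Fin n) ℝ) : Fish p q = Fish q p := by
  rw [Fish_eq_of_subset (Finset.subset_union_left (s₂ := q.support)),
    Fish_eq_of_subset (Finset.subset_union_right (s₁ := p.support)) ]
  rw [Finset.union_comm]
  congr 1
  funext u
  ring

lemma Fish_zero_right (p : MvPolynomial (Fin n) ℝ) : Fish p 0 = 0 := by
  simp [Fish]

lemma Hm_pderiv {p : MvPolynomial (Fin n) ℝ} {i : ℕ} (hp : Hm p (i+1)) (m : Fin n) :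
    Hm (pderiv m p) i := by
  intro u hu
  rw [coeff_pderiv'] at hu
  have h2 : coeff (u + Finsupp.single m 1) p ≠ 0 := fun h => hu (by rw [h]; ring)
  have h3 := hp _ h2
  rw [sum_asa] at h3
  omega

lemma Hm_zero_pderiv {p : MvPolynomial (Fin n) ℝ} (hp : Hm p 0) (m : Fin n) :
    pderiv m p = 0 := by
  apply MvPolynomial.ext
  intro w
  rw [coeff_pderiv', coeff_zero]
  by_cases hc : coeff (w + Finsupp.single m 1) p = 0
  · rw [hc]; ring
  · exfalso
    have h3 := hp _ hc
    rw [sum_asa] at h3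
    omega

lemma Hm_zero_eq_C {p : MvPolynomial (Fin n) ℝ} (hp : Hm p 0) :
    p = C (coeff 0 p) := by
  apply MvPolynomial.ext
  intro w
  rw [coeff_C]
  by_cases hw : (0 : Fin n →₀ ℕ) = w
  · rw [if_pos hw, ← hw]
  · rw [if_neg hw]
    by_contra hc
    have h3 := hp _ hc
    apply hw
    ext b
    have : w b ≤ ∑ m, w m := Finset.single_le_sum (fun _ _ => Nat.zero_le _) (mem_univ b)
    simp only [Finsupp.coe_zero, Pi.zero_apply]
    omega

lemma euler {p : MvPolynomial (Fin n) ℝ} {i : ℕ} (hp : Hm p i) :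
    ∑ m, X m * pderiv m p = (i : ℝ) • p := by
  apply MvPolynomial.ext
  intro w
  rw [coeff_smul, smul_eq_mul]
  have hterm : ∀ m, coeff w (X m * pderiv m p) = (w m : ℝ) * coeff w p := by
    intro m
    rw [coeff_X_mul']
    by_cases hm : m ∈ w.support
    · rw [if_pos hm, coeff_pderiv']
      have hwm := Finsupp.mem_support_iff.1 hm
      rw [fsub_add_cancel hwm, ssa]
      have hw1 : 1 ≤ w m := Nat.one_le_iff_ne_zero.2 hwm
      congr 1
      push_cast [Nat.cast_sub hw1]
      ring
    · rw [if_neg hm]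
      have : w m = 0 := Finsupp.notMem_support_iff.1 hm
      rw [this]
      simp
  rw [MvPolynomial.coeff_sum]
  simp_rw [hterm]
  rw [← Finset.sum_mul]
  by_cases hc : coeff w p = 0
  · rw [hc]; ring
  · rw [show (∑ m, (w m : ℝ)) = (i : ℝ) by exact_mod_cast congrArg (Nat.cast : ℕ → ℝ) (hp w hc)]

lemma Wfac_add_single (w : Fin n →₀ ℕ) (m : Fin n) :
    Wfac (w + Finsupp.single m 1) = ((w m : ℝ) + 1) * Wfac w := by
  rw [Wfac, Wfac, ← Finset.mul_prod_erase univ _ (mem_univ m),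
    ← Finset.mul_prod_erase univ (fun m' => (((w m').factorial : ℕ) : ℝ)) (mem_univ m)]
  rw [asa, Finset.prod_congr rfl
    (fun m' hm' => by rw [asn w (Finset.mem_erase.1 hm').1])]
  rw [Nat.factorial_succ]
  push_cast
  ring

lemma Fish_pderiv (p q : MvPolynomial (Fin n) ℝ) (m : Fin n) :
    Fish (pderiv m p) (pderiv m q)
      = ∑ u ∈ p.support, (u m : ℝ) * (coeff u p * coeff u q * Wfac u) := by
  have hfil : ∑ u ∈ p.support, (u m : ℝ) * (coeff u p * coeff u q * Wfac u)
      = ∑ u ∈ p.support.filter (fun u => u m ≠ 0),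
          (u m : ℝ) * (coeff u p * coeff u q * Wfac u) := by
    classical
    refine (Finset.sum_filter_of_ne fun u hu hne => ?_).symm
    intro h
    rw [h] at hne
    simp at hne
  rw [hfil, Fish]
  refine Finset.sum_nbij' (i := fun w => w + Finsupp.single m 1)
    (j := fun u => u - Finsupp.single m 1) ?_ ?_ ?_ ?_ ?_
  · intro w hw
    rw [mem_support_iff, coeff_pderiv'] at hw
    rw [Finset.mem_filter, mem_support_iff]
    constructor
    · intro h; exact hw (by rw [h]; ring)
    · rw [asa]; omega
  · intro u hu
    rw [Finset.mem_filter, mem_support_iff] at hu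
    rw [mem_support_iff, coeff_pderiv']
    rw [fsub_add_cancel hu.2]
    refine mul_ne_zero ?_ hu.1
    rw [ssa]
    have h1 : 1 ≤ u m := Nat.one_le_iff_ne_zero.2 hu.2
    push_cast [Nat.cast_sub h1]
    have : (1:ℝ) ≤ (u m : ℝ) := by exact_mod_cast h1
    linarith
  · intro w hw
    exact fadd_sub_cancel w m
  · intro u hu
    rw [Finset.mem_filter] at hu
    exact fsub_add_cancel hu.2
  · intro w hw
    rw [coeff_pderiv', coeff_pderiv', Wfac_add_single, asa]
    push_cast
    ring

lemma Fish_sum_pderiv {p q : MvPolynomial (Fin n) ℝ} {i : ℕ} (hp : Hm p i) :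
    ∑ m, Fish (pderiv m p) (pderiv m q) = (i : ℝ) * Fish p q := by
  simp_rw [Fish_pderiv]
  rw [Finset.sum_comm, Fish, Finset.mul_sum]
  refine Finset.sum_congr rfl fun u hu => ?_
  rw [← Finset.sum_mul]
  rw [show (∑ m, (u m : ℝ)) = (i : ℝ) by
    exact_mod_cast congrArg (Nat.cast : ℕ → ℝ) (hp u (mem_support_iff.1 hu))]

def evalE (p : MvPolynomial (Fin n) ℝ) (x : EuclideanSpace ℝ (Fin n)) : ℝ :=
  MvPolynomial.eval (fun m => x m) p

def Phi (n : ℕ) (β : ℝ) (p : MvPolynomial (Fin n) ℝ) : ℝ :=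
  ∫ x, evalE p x ∂(gaussMeasure n β)

lemma evalE_monomial (u : Fin n →₀ ℕ) (c : ℝ) (x : EuclideanSpace ℝ (Fin n)) :
    evalE (monomial u c) x = c * ∏ m, (x m) ^ (u m) := by
  rw [evalE, eval_monomial, Finsupp.prod_pow]

include hβ

lemma integrable_evalE (p : MvPolynomial (Fin n) ℝ) :
    Integrable (evalE p) (gaussMeasure n β) := by
  have : evalE p = fun x => ∑ u ∈ p.support, coeff u p * ∏ m, (x m) ^ (u m) := by
    funext x
    conv_lhs => rw [show p = ∑ v ∈ p.support, monomial v (coeff v p) from p.as_sum]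
    rw [evalE, map_sum]
    exact Finset.sum_congr rfl fun u _ => evalE_monomial u (coeff u p) x
  rw [this]
  exact integrable_finset_sum _ fun u _ => (integrable_monomial hβ u).const_mul _

lemma Phi_add (p q : MvPolynomial (Fin n) ℝ) :
    Phi n β (p + q) = Phi n β p + Phi n β q := by
  rw [Phi, Phi, Phi, ← integral_add (integrable_evalE hβ p) (integrable_evalE hβ q)]
  congr 1
  funext x
  rw [evalE, evalE, evalE, map_add]

lemma Phi_zero : Phi n β (0 : MvPolynomial (Fin n) ℝ) = 0 := by
  rw [Phi]
  have : ∀ x : EuclideanSpace ℝ (Fin n), evalE (0 : MvPolynomial (Fin n) ℝ) x = 0 := by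
    intro x; rw [evalE, map_zero]
  simp_rw [this]
  exact integral_zero _ _

lemma Phi_smul (c : ℝ) (p : MvPolynomial (Fin n) ℝ) :
    Phi n β (c • p) = c * Phi n β p := by
  rw [Phi, Phi, ← integral_const_mul]
  congr 1
  funext x
  rw [evalE, evalE, smul_eq_C_mul, map_mul, eval_C]

lemma Phi_sum {α : Type*} (S : Finset α) (f : α → MvPolynomial (Fin n) ℝ) :
    Phi n β (∑ t ∈ S, f t) = ∑ t ∈ S, Phi n β (f t) := by
  classical
  induction S using Finset.induction_on with
  | empty => simpa using Phi_zero hβ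
  | insert a s hnot ih =>
    rw [Finset.sum_insert hnot, Finset.sum_insert hnot, Phi_add hβ, ih]

lemma Phi_monomial (u : Fin n →₀ ℕ) (c : ℝ) :
    Phi n β (monomial u c) = c * ∏ m, J β (u m) := by
  rw [Phi]
  simp_rw [evalE_monomial]
  rw [integral_const_mul, int_monomial hβ]

omit hβ in
lemma Jstep (t : ℕ) (hβ : 0 < β) : J β (t+1) = β/2 * t * J β (t-1) := by
  cases t with
  | zero => simpa using Jodd (β := β) 0
  | succ s =>
    rw [show s + 1 + 1 = s + 2 from rfl, Jrec hβ s]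
    push_cast
    ring

lemma PhiX (m : Fin n) (r : MvPolynomial (Fin n) ℝ) :
    Phi n β (X m * r) = β/2 * Phi n β (pderiv m r) := by
  induction r using MvPolynomial.induction_on' with
  | add p q hp hq =>
    rw [mul_add, map_add, Phi_add hβ, Phi_add hβ, hp, hq]
    ring
  | monomial u c =>
    have hX : (X m : MvPolynomial (Fin n) ℝ) = monomial (Finsupp.single m 1) 1 := by
      rw [← pow_one (X m : MvPolynomial (Fin n) ℝ), X_pow_eq_monomial]
    rw [hX, monomial_mul, one_mul, pderiv_monomial, Phi_monomial hβ, Phi_monomial hβ]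
    rw [show Finsupp.single m 1 + u = u + Finsupp.single m 1 from add_comm _ _]
    rw [← Finset.mul_prod_erase univ (fun m' => J β ((u + Finsupp.single m 1 : Fin n →₀ ℕ) m'))
        (mem_univ m),
      ← Finset.mul_prod_erase univ (fun m' => J β ((u - Finsupp.single m 1 : Fin n →₀ ℕ) m'))
        (mem_univ m)]
    have e1 : ∏ m' ∈ univ.erase m, J β ((u + Finsupp.single m 1 : Fin n →₀ ℕ) m')
        = ∏ m' ∈ univ.erase m, J β (u m') :=
      Finset.prod_congr rfl (fun m' hm' => by rw [asn u (Finset.mem_erase.1 hm').1])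
    have e2 : ∏ m' ∈ univ.erase m, J β ((u - Finsupp.single m 1 : Fin n →₀ ℕ) m')
        = ∏ m' ∈ univ.erase m, J β (u m') :=
      Finset.prod_congr rfl (fun m' hm' => by rw [ssn u (Finset.mem_erase.1 hm').1])
    rw [e1, e2, asa, ssa, Jstep (u m) hβ]
    push_cast
    ring

lemma key_step {p : MvPolynomial (Fin n) ℝ} (q : MvPolynomial (Fin n) ℝ) {i : ℕ}
    (hp : Hm p i) (hi : i ≠ 0) (hlp : lapP p = 0) :
    Phi n β (p * q) = β/(2*i) * ∑ m, Phi n β (pderiv m p * pderiv m q) := by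
  have hi' : ((i : ℝ)) ≠ 0 := Nat.cast_ne_zero.2 hi
  have h1 : (i : ℝ) * Phi n β (p * q) = ∑ m, Phi n β (X m * (pderiv m p * q)) := by
    rw [← Phi_smul hβ, ← smul_mul_assoc, ← euler hp, Finset.sum_mul, Phi_sum hβ]
    congr 1
    funext m
    rw [mul_assoc]
  have h2 : ∀ m : Fin n, Phi n β (X m * (pderiv m p * q))
      = β/2 * (Phi n β (pderiv m (pderiv m p) * q) + Phi n β (pderiv m p * pderiv m q)) := by
    intro m
    rw [PhiX hβ, pderiv_mul, Phi_add hβ]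
  have h3 : (∑ m, Phi n β (pderiv m (pderiv m p) * q)) = 0 := by
    rw [← Phi_sum hβ]
    have : ∑ m, pderiv m (pderiv m p) * q = lapP p * q := by
      rw [lapP, Finset.sum_mul]
    rw [this, hlp, zero_mul, Phi_zero hβ]
  have h4 : (i : ℝ) * Phi n β (p * q)
      = β/2 * ∑ m, Phi n β (pderiv m p * pderiv m q) := by
    rw [h1]
    simp_rw [h2]
    rw [← Finset.mul_sum, Finset.sum_add_distrib, h3, zero_add]
  field_simp at h4 ⊢
  linarith [h4]

lemma key : ∀ N i j (p q : MvPolynomial (Fin n) ℝ), i + j = N → Hm p i → Hm q j →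
    lapP p = 0 → lapP q = 0 →
    Phi n β (p * q) = if i = j then (β/2)^i * Fish p q else 0 := by
  intro N
  induction N using Nat.strong_induction_on with
  | _ N IH =>
    intro i j p q hN hp hq hlp hlq
    rcases Nat.eq_zero_or_pos i with hi | hi
    · subst hi
      rcases Nat.eq_zero_or_pos j with hj | hj
      · subst hj
        rw [if_pos rfl, pow_zero, one_mul]
        rw [Hm_zero_eq_C hp, Hm_zero_eq_C hq]
        rw [show (C (coeff 0 p) : MvPolynomial (Fin n) ℝ) * C (coeff 0 q)
            = monomial 0 (coeff 0 p * coeff 0 q) by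
          rw [← C_mul, C_apply]]
        rw [Phi_monomial hβ]
        have hJ : ∀ m : Fin n, J β ((0 : Fin n →₀ ℕ) m) = 1 := by
          intro m; simpa using J0 hβ
        rw [Finset.prod_congr rfl fun m _ => hJ m, Finset.prod_const_one, mul_one]
        have hsub : (C (coeff 0 p) : MvPolynomial (Fin n) ℝ).support ⊆ {0} := by
          intro u hu
          rw [mem_support_iff, coeff_C] at hu
          rw [Finset.mem_singleton]
          by_contra hc
          exact hu (if_neg (fun h => hc h.symm))
        rw [Fish_eq_of_subset hsub]
        rw [Finset.sum_singleton]
        have : Wfac (0 : Fin n →₀ ℕ) = 1 := by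
          rw [Wfac]
          simp
        rw [this, coeff_C, coeff_C]
        simp
      · rw [if_neg (by omega)]
        rw [mul_comm]
        rw [key_step hβ p hq (by omega) hlq]
        have : ∀ m : Fin n, pderiv m q * pderiv m p = 0 := by
          intro m
          rw [Hm_zero_pderiv hp, mul_zero]
        simp_rw [this]
        rw [Phi_zero hβ]
        simp
    · rw [key_step hβ q hp (by omega) hlp]
      rcases Nat.eq_zero_or_pos j with hj | hj
      · subst hj
        rw [if_neg (by omega)]
        have : ∀ m : Fin n, pderiv m p * pderiv m q = 0 := by
          intro m
          rw [Hm_zero_pderiv hq, mul_zero]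
        simp_rw [this]
        rw [Phi_zero hβ]
        simp
      · obtain ⟨i', rfl⟩ : ∃ i', i = i' + 1 := ⟨i - 1, by omega⟩
        obtain ⟨j', rfl⟩ : ∃ j', j = j' + 1 := ⟨j - 1, by omega⟩
        have hIH : ∀ m : Fin n, Phi n β (pderiv m p * pderiv m q)
            = if i' = j' then (β/2)^i' * Fish (pderiv m p) (pderiv m q) else 0 := by
          intro m
          exact IH (i' + j') (by omega) i' j' (pderiv m p) (pderiv m q) rfl
            (Hm_pderiv hp m) (Hm_pderiv hq m)
            (by rw [lapP_pderiv, hlp, map_zero]) (by rw [lapP_pderiv, hlq, map_zero])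
        simp_rw [hIH]
        by_cases hij : i' = j'
        · subst hij
          rw [if_pos rfl]
          simp only [eq_self_iff_true, if_true]
          rw [← Finset.mul_sum, Fish_sum_pderiv hp]
          have hne : ((i' : ℝ) + 1) ≠ 0 := by positivity
          field_simp
          ring
        · simp only [if_neg hij, Finset.sum_const_zero, mul_zero]
          rw [if_neg (by omega)]

omit hβ


def gradE (p : MvPolynomial (Fin n) ℝ) (x : EuclideanSpace ℝ (Fin n)) :
    EuclideanSpace ℝ (Fin n) →L[ℝ] ℝ :=
  ∑ m, evalE (pderiv m p) x • (EuclideanSpace.proj m : EuclideanSpace ℝ (Fin n) →L[ℝ] ℝ)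

lemma hasFDerivAt_evalE (p : MvPolynomial (Fin n) ℝ) (x : EuclideanSpace ℝ (Fin n)) :
    HasFDerivAt (evalE p) (gradE p x) x := by
  induction p using MvPolynomial.induction_on with
  | C c =>
    have h1 : evalE (C c : MvPolynomial (Fin n) ℝ) = fun _ => c := by
      funext y; rw [evalE, eval_C]
    have h2 : gradE (C c : MvPolynomial (Fin n) ℝ) x = 0 := by
      rw [gradE]
      refine Finset.sum_eq_zero fun m _ => ?_
      rw [pderiv_C]
      have : evalE (0 : MvPolynomial (Fin n) ℝ) x = 0 := by rw [evalE, map_zero]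
      rw [this, zero_smul]
    rw [h1, h2]
    exact hasFDerivAt_const c x
  | add p q hp hq =>
    have h1 : evalE (p + q) = fun y => evalE p y + evalE q y := by
      funext y; rw [evalE, evalE, evalE, map_add]
    have h2 : gradE (p + q) x = gradE p x + gradE q x := by
      rw [gradE, gradE, gradE, ← Finset.sum_add_distrib]
      refine Finset.sum_congr rfl fun m _ => ?_
      rw [map_add]
      have : evalE (pderiv m p + pderiv m q) x = evalE (pderiv m p) x + evalE (pderiv m q) x := by
        rw [evalE, evalE, evalE, map_add]
      rw [this, add_smul]
    rw [h1, h2]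
    exact hp.add hq
  | mul_X p j hp =>
    have h1 : evalE (p * X j) = fun y => evalE p y * (EuclideanSpace.proj j (𝕜 := ℝ)) y := by
      funext y; rw [evalE, map_mul, eval_X]; rfl
    have hmul := hp.mul ((EuclideanSpace.proj j (𝕜 := ℝ)).hasFDerivAt (x := x))
    rw [show evalE p * ⇑(EuclideanSpace.proj j (𝕜 := ℝ)) = evalE (p * X j) from h1.symm] at hmul
    have hterm : ∀ m : Fin n, evalE (pderiv m (p * X j)) x
        = evalE (pderiv m p) x * x j + (if m = j then evalE p x else 0) := by
      intro m
      rw [pderiv_mul]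
      have e1 : evalE (pderiv m p * X j + p * pderiv m (X j)) x
          = evalE (pderiv m p) x * x j + evalE p x * evalE (pderiv m (X j)) x := by
        rw [evalE, map_add, map_mul, map_mul, eval_X]
        rfl
      rw [e1]
      by_cases hm : m = j
      · subst hm
        rw [pderiv_X_self, if_pos rfl]
        have : evalE (1 : MvPolynomial (Fin n) ℝ) x = 1 := by rw [evalE, map_one]
        rw [this, mul_one]
      · rw [pderiv_X_of_ne (fun h => hm h.symm), if_neg hm]
        have : evalE (0 : MvPolynomial (Fin n) ℝ) x = 0 := by rw [evalE, map_zero]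
        rw [this, mul_zero, add_zero]
    have heq : gradE (p * X j) x
        = evalE p x • (EuclideanSpace.proj j : EuclideanSpace ℝ (Fin n) →L[ℝ] ℝ)
          + (EuclideanSpace.proj j (𝕜 := ℝ)) x • gradE p x := by
      rw [gradE]
      simp_rw [hterm, add_smul]
      rw [Finset.sum_add_distrib]
      have hA : ∑ m, (evalE (pderiv m p) x * x j)
            • (EuclideanSpace.proj m : EuclideanSpace ℝ (Fin n) →L[ℝ] ℝ)
          = (EuclideanSpace.proj j (𝕜 := ℝ)) x • gradE p x := by
        rw [show (EuclideanSpace.proj j (𝕜 := ℝ)) x = x j from rfl, gradE, Finset.smul_sum]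
        refine Finset.sum_congr rfl fun m _ => ?_
        rw [mul_comm, mul_smul]
      have hB : ∑ m, (if m = j then evalE p x else 0)
            • (EuclideanSpace.proj m : EuclideanSpace ℝ (Fin n) →L[ℝ] ℝ)
          = evalE p x • (EuclideanSpace.proj j : EuclideanSpace ℝ (Fin n) →L[ℝ] ℝ) := by
        simp_rw [ite_smul, zero_smul]
        rw [Finset.sum_ite_eq' univ j
          (fun m => evalE p x • (EuclideanSpace.proj m : EuclideanSpace ℝ (Fin n) →L[ℝ] ℝ))]
        rw [if_pos (mem_univ j)]
      rw [hA, hB, add_comm]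
    rw [heq]
    exact hmul

lemma fderiv_evalE (p : MvPolynomial (Fin n) ℝ) :
    fderiv ℝ (evalE p) = gradE p := by
  funext x
  exact (hasFDerivAt_evalE p x).fderiv

lemma gradE_apply_single (p : MvPolynomial (Fin n) ℝ) (x : EuclideanSpace ℝ (Fin n)) (i : Fin n) :
    gradE p x (EuclideanSpace.single i 1) = evalE (pderiv i p) x := by
  rw [gradE, ContinuousLinearMap.sum_apply]
  have hterm : ∀ m : Fin n,
      (evalE (pderiv m p) x • (EuclideanSpace.proj m : EuclideanSpace ℝ (Fin n) →L[ℝ] ℝ))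
          (EuclideanSpace.single i 1)
        = if m = i then evalE (pderiv m p) x else 0 := by
    intro m
    rw [ContinuousLinearMap.smul_apply, smul_eq_mul]
    have : (EuclideanSpace.proj m (𝕜 := ℝ)) (EuclideanSpace.single i (1:ℝ))
        = if m = i then 1 else 0 := by
      rw [show (EuclideanSpace.proj m (𝕜 := ℝ)) (EuclideanSpace.single i (1:ℝ))
        = (EuclideanSpace.single i (1:ℝ)) m from rfl]
      rw [EuclideanSpace.single_apply]
    rw [this]
    by_cases hm : m = i
    · rw [if_pos hm, if_pos hm, mul_one]
    · rw [if_neg hm, if_neg hm, mul_zero]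
  simp_rw [hterm]
  rw [Finset.sum_ite_eq' univ i (fun m => evalE (pderiv m p) x), if_pos (mem_univ i)]

lemma lap_of_harmonic (p : MvPolynomial (Fin n) ℝ) (h : IsHarmonic (evalE p)) :
    lapP p = 0 := by
  have hpt : ∀ x : EuclideanSpace ℝ (Fin n), evalE (lapP p) x = 0 := by
    intro x
    have h2 := h.2 x
    have hstep : ∀ i : Fin n,
        iteratedFDeriv ℝ 2 (evalE p) x
            ![EuclideanSpace.single i 1, EuclideanSpace.single i 1]
          = evalE (pderiv i (pderiv i p)) x := by
      intro i
      rw [iteratedFDeriv_two_apply]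
      rw [show (![EuclideanSpace.single i (1:ℝ), EuclideanSpace.single i 1] : Fin 2 →
          EuclideanSpace ℝ (Fin n)) 0 = EuclideanSpace.single i 1 from rfl,
        show (![EuclideanSpace.single i (1:ℝ), EuclideanSpace.single i 1] : Fin 2 →
          EuclideanSpace ℝ (Fin n)) 1 = EuclideanSpace.single i 1 from rfl]
      rw [fderiv_evalE]
      have hL : HasFDerivAt (gradE p)
          (∑ m, (gradE (pderiv m p) x).smulRight
            (EuclideanSpace.proj m : EuclideanSpace ℝ (Fin n) →L[ℝ] ℝ)) x := by
        refine HasFDerivAt.fun_sum fun m _ => ?_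
        exact (hasFDerivAt_evalE (pderiv m p) x).smul_const
          (EuclideanSpace.proj m : EuclideanSpace ℝ (Fin n) →L[ℝ] ℝ)
      rw [hL.fderiv]
      rw [ContinuousLinearMap.sum_apply]
      have : ∀ m : Fin n,
          ((gradE (pderiv m p) x).smulRight
              (EuclideanSpace.proj m : EuclideanSpace ℝ (Fin n) →L[ℝ] ℝ))
            (EuclideanSpace.single i 1)
          = gradE (pderiv m p) x (EuclideanSpace.single i 1) •
              (EuclideanSpace.proj m : EuclideanSpace ℝ (Fin n) →L[ℝ] ℝ) :=
        fun m => ContinuousLinearMap.smulRight_apply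
      simp_rw [this]
      rw [ContinuousLinearMap.sum_apply]
      have h3 : ∀ m : Fin n,
          (gradE (pderiv m p) x (EuclideanSpace.single i 1) •
            (EuclideanSpace.proj m : EuclideanSpace ℝ (Fin n) →L[ℝ] ℝ))
              (EuclideanSpace.single i 1)
          = if m = i then gradE (pderiv m p) x (EuclideanSpace.single i 1) else 0 := by
        intro m
        rw [ContinuousLinearMap.smul_apply, smul_eq_mul]
        rw [show (EuclideanSpace.proj m (𝕜 := ℝ)) (EuclideanSpace.single i (1:ℝ))
          = (EuclideanSpace.single i (1:ℝ)) m from rfl, EuclideanSpace.single_apply]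
        by_cases hm : m = i
        · rw [if_pos hm, if_pos hm, mul_one]
        · rw [if_neg hm, if_neg hm, mul_zero]
      simp_rw [h3]
      rw [Finset.sum_ite_eq' univ i
        (fun m => gradE (pderiv m p) x (EuclideanSpace.single i 1)), if_pos (mem_univ i)]
      rw [gradE_apply_single]
    rw [show evalE (lapP p) x = ∑ i, evalE (pderiv i (pderiv i p)) x by
      rw [lapP, evalE, map_sum]; rfl]
    rw [← Finset.sum_congr rfl fun i _ => hstep i]
    exact h2
  apply MvPolynomial.funext
  intro y
  have := hpt (WithLp.toLp 2 y)
  rw [evalE] at this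
  rw [show (fun m => (WithLp.toLp 2 y : EuclideanSpace ℝ (Fin n)) m) = y from rfl] at this
  rw [this, map_zero]


end Aux

/-- For harmonic homogeneous components `ψ_k^i(x) = ∑_{|s|=i} a_s^k x^s`,
`‖∑ₖ∑ᵢ ψ_k^i‖²_{L²(ℝⁿ,dμ_β)} = ∑_{k,j} ∑ᵢ (β/2)^i ∑_{|s|=i} a_s^k a_s^j s!`. -/
theorem stmt18 (n : ℕ) (hn : 2 ≤ n) (β : ℝ) (hβ : 0 < β) (M : ℕ)
    (a : ℕ → (Fin n → ℕ) → ℝ)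
    (hdeg : ∀ k s, k < ∑ m, s m → a k s = 0)
    (hharm : ∀ k i, IsHarmonic (fun x : EuclideanSpace ℝ (Fin n) =>
      ∑ s ∈ Finset.Nat.antidiagonalTuple n i, a k s * ∏ m, (x m) ^ (s m))) :
    ∫ x, (∑ k ∈ Finset.range (M + 1), ∑ i ∈ Finset.range (k + 1),
          ∑ s ∈ Finset.Nat.antidiagonalTuple n i, a k s * ∏ m, (x m) ^ (s m)) ^ 2
        ∂(gaussMeasure n β) =
      ∑ k ∈ Finset.range (M + 1), ∑ j ∈ Finset.range (M + 1), ∑ i ∈ Finset.range (M + 1),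
        β ^ i / 2 ^ i *
          ∑ s ∈ Finset.Nat.antidiagonalTuple n i,
            a k s * a j s * ∏ m, ((s m).factorial : ℝ) := by
  classical
  set Pk : ℕ → ℕ → MvPolynomial (Fin n) ℝ := fun k i =>
    ∑ s ∈ Finset.Nat.antidiagonalTuple n i,
      monomial (Finsupp.equivFunOnFinite.symm s) (a k s) with hPk
  have h_eval : ∀ k i (x : EuclideanSpace ℝ (Fin n)),
      evalE (Pk k i) x = ∑ s ∈ Finset.Nat.antidiagonalTuple n i,
        a k s * ∏ m, (x m) ^ (s m) := by
    intro k i x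
    rw [hPk, evalE, map_sum]
    refine Finset.sum_congr rfl fun s _ => ?_
    rw [eval_monomial, Finsupp.prod_pow]
    simp only [Finsupp.coe_equivFunOnFinite_symm]
  have h_coeffzero : ∀ k i (u : Fin n →₀ ℕ), (∑ m, u m) ≠ i → coeff u (Pk k i) = 0 := by
    intro k i u hu
    rw [hPk, MvPolynomial.coeff_sum]
    refine Finset.sum_eq_zero fun s hs => ?_
    rw [coeff_monomial, if_neg]
    intro h
    apply hu
    rw [← h]
    have h2 := (Finset.Nat.mem_antidiagonalTuple.1 hs)
    rw [← h2]
    exact Finset.sum_congr rfl fun m _ => by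
      rw [Finsupp.coe_equivFunOnFinite_symm]
  have h_Hm : ∀ k i, Hm (Pk k i) i := by
    intro k i u hu
    by_contra hc
    exact hu (h_coeffzero k i u hc)
  have h_coeff : ∀ k i s, s ∈ Finset.Nat.antidiagonalTuple n i →
      coeff (Finsupp.equivFunOnFinite.symm s) (Pk k i) = a k s := by
    intro k i s hs
    rw [hPk, MvPolynomial.coeff_sum]
    have : ∀ s' ∈ Finset.Nat.antidiagonalTuple n i,
        coeff (Finsupp.equivFunOnFinite.symm s)
          (monomial (Finsupp.equivFunOnFinite.symm s') (a k s'))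
        = if s' = s then a k s' else 0 := by
      intro s' _
      rw [coeff_monomial]
      by_cases h : s' = s
      · rw [if_pos h, if_pos (by rw [h])]
      · rw [if_neg h, if_neg (fun hh => h (Finsupp.equivFunOnFinite.symm.injective hh))]
    rw [Finset.sum_congr rfl this, Finset.sum_ite_eq' _ s (fun s' => a k s'), if_pos hs]
  have h_supp : ∀ k i, (Pk k i).support ⊆
      (Finset.Nat.antidiagonalTuple n i).image (Finsupp.equivFunOnFinite.symm) := by
    intro k i u hu
    by_contra hni
    refine (mem_support_iff.1 hu) ?_
    rw [hPk, MvPolynomial.coeff_sum]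
    refine Finset.sum_eq_zero fun s hs => ?_
    rw [coeff_monomial, if_neg]
    intro h
    exact hni (Finset.mem_image.2 ⟨s, hs, h⟩)
  have h_lap : ∀ k i, lapP (Pk k i) = 0 := by
    intro k i
    have h := hharm k i
    rw [show (fun x : EuclideanSpace ℝ (Fin n) =>
        ∑ s ∈ Finset.Nat.antidiagonalTuple n i, a k s * ∏ m, (x m) ^ (s m))
      = evalE (Pk k i) from funext fun x => (h_eval k i x).symm] at h
    exact lap_of_harmonic _ h
  have h_zero : ∀ k i, k < i → Pk k i = 0 := by
    intro k i hki
    rw [hPk]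
    refine Finset.sum_eq_zero fun s hs => ?_
    have h2 := Finset.Nat.mem_antidiagonalTuple.1 hs
    rw [hdeg k s (by omega), monomial_zero]
  have h_fish : ∀ k j i, Fish (Pk k i) (Pk j i)
      = ∑ s ∈ Finset.Nat.antidiagonalTuple n i,
          a k s * a j s * ∏ m, ((s m).factorial : ℝ) := by
    intro k j i
    rw [Fish_eq_of_subset (h_supp k i)]
    rw [Finset.sum_image (fun s _ s' _ h => Finsupp.equivFunOnFinite.symm.injective h)]
    refine Finset.sum_congr rfl fun s hs => ?_
    rw [h_coeff k i s hs, h_coeff j i s hs]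
    congr 1
  set Q : MvPolynomial (Fin n) ℝ :=
    ∑ k ∈ Finset.range (M + 1), ∑ i ∈ Finset.range (M + 1), Pk k i with hQ
  have stepA : ∫ x, (∑ k ∈ Finset.range (M + 1), ∑ i ∈ Finset.range (k + 1),
        ∑ s ∈ Finset.Nat.antidiagonalTuple n i, a k s * ∏ m, (x m) ^ (s m)) ^ 2
      ∂(gaussMeasure n β) = Phi n β (Q * Q) := by
    rw [Phi]
    congr 1
    funext x
    have hQx : evalE Q x = ∑ k ∈ Finset.range (M + 1), ∑ i ∈ Finset.range (k + 1),
        ∑ s ∈ Finset.Nat.antidiagonalTuple n i, a k s * ∏ m, (x m) ^ (s m) := by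
      rw [hQ, evalE, map_sum]
      refine Finset.sum_congr rfl fun k hk => ?_
      rw [map_sum]
      have hkM := Finset.mem_range.1 hk
      have hsub : Finset.range (k + 1) ⊆ Finset.range (M + 1) :=
        Finset.range_subset_range.2 (by omega)
      rw [← Finset.sum_subset hsub (fun i _ hi => ?_)]
      · exact Finset.sum_congr rfl fun i _ => h_eval k i x
      · rw [h_zero k i (by simp at hi ⊢; omega), map_zero]
    rw [show evalE (Q * Q) x = (evalE Q x) ^ 2 by rw [evalE, map_mul, sq]; rfl, hQx]
  rw [stepA]
  have stepB : Q * Q = ∑ k ∈ Finset.range (M + 1), ∑ j ∈ Finset.range (M + 1),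
      ∑ i ∈ Finset.range (M + 1), ∑ i' ∈ Finset.range (M + 1), Pk k i * Pk j i' := by
    rw [hQ, Finset.sum_mul_sum]
    refine Finset.sum_congr rfl fun k _ => Finset.sum_congr rfl fun j _ => ?_
    rw [Finset.sum_mul_sum]
  rw [stepB, Phi_sum hβ]
  refine Finset.sum_congr rfl fun k hk => ?_
  rw [Phi_sum hβ]
  refine Finset.sum_congr rfl fun j hj => ?_
  rw [Phi_sum hβ]
  refine Finset.sum_congr rfl fun i hi => ?_
  rw [Phi_sum hβ]
  have hkey : ∀ i' ∈ Finset.range (M + 1), Phi n β (Pk k i * Pk j i')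
      = if i = i' then (β/2)^i * Fish (Pk k i) (Pk j i') else 0 := by
    intro i' _
    exact key hβ (i + i') i i' (Pk k i) (Pk j i') rfl (h_Hm k i) (h_Hm j i')
      (h_lap k i) (h_lap j i')
  rw [Finset.sum_congr rfl hkey]
  rw [Finset.sum_ite_eq (Finset.range (M+1)) i
    (fun i' => (β/2)^i * Fish (Pk k i) (Pk j i')), if_pos hi]
  rw [h_fish k j i, div_pow]

end
end
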